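/- Let C be an (m+n)×(m+n) real totally nonnegative matrix (so det(1+C) ≥ 1), let D be the lower-right n×n corner of C(1+C)⁻¹, and suppose det(1−D) ≠ 0. Then E = D(1−D)⁻¹ is totally nonnegative. -/

import Mathlib

open Matrix

/-- A real matrix is totally nonnegative if every minor (determinant of a square
submatrix with rows and columns taken in increasing order) is nonnegative. -/
def TotallyNonneg {n : ℕ} (M : Matrix (Fin n) (Fin n) ℝ) : Prop :=
  ∀ (k : ℕ) (f g : Fin k → Fin n), StrictMono f → StrictMono g →
    0 ≤ (M.submatrix f g).det

section WidomAux

/-- Deleting a unit row: determinant of a matrix whose row `a` is `e_a`. -/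
lemma det_updateRow_single {p : ℕ} (M : Matrix (Fin (p+1)) (Fin (p+1)) ℝ) (a : Fin (p+1)) :
    (M.updateRow a (Pi.single a 1)).det = (M.submatrix a.succAbove a.succAbove).det := by
  rw [Matrix.det_succ_row _ a]
  rw [Finset.sum_eq_single a]
  · have h1 : (M.updateRow a (Pi.single a 1)).submatrix a.succAbove a.succAbove
        = M.submatrix a.succAbove a.succAbove := by
      ext i j
      simp [Matrix.updateRow_apply, (Fin.succAbove_ne a i)]
    rw [h1]
    simp
  · intro b _ hb
    simp [Matrix.updateRow_self, Pi.single_apply, hb]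
  · simp

lemma split_row {p : ℕ} (B : Matrix (Fin p) (Fin p) ℝ) (s : Fin p → ℝ) (a : Fin p) :
    B + Matrix.diagonal s =
      Matrix.updateRow (B + Matrix.diagonal (Function.update s a 0)) a
        ((B + Matrix.diagonal (Function.update s a 0)) a + (s a) • (Pi.single a 1 : Fin p → ℝ)) := by
  ext i j
  rcases eq_or_ne i a with rfl | hia
  · simp only [Matrix.updateRow_self, Matrix.add_apply, Pi.add_apply, Pi.smul_apply,
      Pi.single_apply, Matrix.diagonal_apply, Function.update_apply, smul_eq_mul]
    rcases eq_or_ne i j with rfl | hij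
    · simp
    · simp [hij, Ne.symm hij]
  · simp only [Matrix.updateRow_ne hia, Matrix.add_apply, Matrix.diagonal_apply,
      Function.update_apply, if_neg hia]

lemma widom_key : ∀ (p : ℕ) (B : Matrix (Fin p) (Fin p) ℝ) (s : Fin p → ℝ),
    (∀ i, 0 ≤ s i) →
    (∀ (j : ℕ) (u : Fin j → Fin p), StrictMono u → 0 ≤ (B.submatrix u u).det) →
    0 ≤ (B + Matrix.diagonal s).det := by
  intro p
  induction p with
  | zero =>
    intro B s _ _
    rw [Matrix.det_fin_zero]
    norm_num
  | succ p ih =>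
    intro B s hs hB
    suffices H : ∀ (T : Finset (Fin (p+1))) (s : Fin (p+1) → ℝ), (∀ i, 0 ≤ s i) →
        (∀ i ∉ T, s i = 0) → 0 ≤ (B + Matrix.diagonal s).det by
      exact H Finset.univ s hs (by simp)
    intro T
    induction T using Finset.induction with
    | empty =>
      intro s _ h0
      have hs0 : s = 0 := funext fun i => h0 i (by simp)
      have hz : Matrix.diagonal (0 : Fin (p+1) → ℝ) = 0 := Matrix.diagonal_zero
      rw [hs0, hz, add_zero]
      simpa using hB _ id strictMono_id
    | @insert a T ha ih2 =>
      intro s hs h0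
      rw [split_row B s a, Matrix.det_updateRow_add, Matrix.det_updateRow_smul,
        Matrix.updateRow_eq_self, det_updateRow_single]
      have h1 : 0 ≤ (B + Matrix.diagonal (Function.update s a 0)).det := by
        refine ih2 _ (fun i => ?_) (fun i hi => ?_)
        · rcases eq_or_ne i a with rfl | hia
          · simp
          · simpa [Function.update_apply, hia] using hs i
        · rcases eq_or_ne i a with rfl | hia
          · simp
          · rw [Function.update_apply, if_neg hia]
            exact h0 i (by simp [hia, hi])
      have h2 : 0 ≤ ((B + Matrix.diagonal (Function.update s a 0)).submatrix
          a.succAbove a.succAbove).det := by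
        have heq : (B + Matrix.diagonal (Function.update s a 0)).submatrix
            a.succAbove a.succAbove
            = B.submatrix a.succAbove a.succAbove
              + Matrix.diagonal ((Function.update s a 0) ∘ a.succAbove) := by
          ext i j
          simp only [Matrix.submatrix_apply, Matrix.add_apply, Matrix.diagonal_apply,
            Function.comp_apply, (Fin.succAbove_right_injective (p := a)).eq_iff]
        rw [heq]
        refine ih _ _ (fun i => ?_) (fun j u hu => ?_)
        · rw [Function.comp_apply, Function.update_of_ne (Fin.succAbove_ne a i)]
          exact hs _
        · rw [Matrix.submatrix_submatrix]
          exact hB _ _ ((Fin.strictMono_succAbove a).comp hu)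
      have := mul_nonneg (hs a) h2
      linarith

lemma widom_key2 : ∀ (p : ℕ) (B : Matrix (Fin p) (Fin p) ℝ),
    (∀ (j : ℕ) (u : Fin j → Fin p), StrictMono u → 0 ≤ (B.submatrix u u).det) →
    1 ≤ (B + 1).det := by
  intro p
  induction p with
  | zero =>
    intro B _
    rw [Matrix.det_fin_zero]
  | succ p ih =>
    intro B hB
    have h1 : (1 : Matrix (Fin (p+1)) (Fin (p+1)) ℝ) = Matrix.diagonal (fun _ => 1) :=
      Matrix.diagonal_one.symm
    rw [h1, split_row B (fun _ => (1:ℝ)) 0, Matrix.det_updateRow_add,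
      Matrix.det_updateRow_smul, Matrix.updateRow_eq_self, det_updateRow_single]
    have h2 : 0 ≤ (B + Matrix.diagonal (Function.update (fun _ => (1:ℝ)) 0 0)).det := by
      refine widom_key _ _ _ (fun i => ?_) hB
      rcases eq_or_ne i 0 with rfl | hi
      · simp
      · rw [Function.update_of_ne hi]; norm_num
    have h3 : 1 ≤ ((B + Matrix.diagonal (Function.update (fun _ => (1:ℝ)) 0 0)).submatrix
        (Fin.succAbove 0) (Fin.succAbove 0)).det := by
      have heq : (B + Matrix.diagonal (Function.update (fun _ => (1:ℝ)) 0 0)).submatrix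
          (Fin.succAbove 0) (Fin.succAbove 0)
          = B.submatrix (Fin.succAbove 0) (Fin.succAbove 0) + 1 := by
        ext i j
        simp only [Matrix.submatrix_apply, Matrix.add_apply, Matrix.diagonal_apply,
          Matrix.one_apply,
          (Fin.succAbove_right_injective (p := (0 : Fin (p+1)))).eq_iff,
          Function.update_of_ne (Fin.succAbove_ne 0 i)]
      rw [heq]
      exact ih _ (fun j u hu => by
        rw [Matrix.submatrix_submatrix]
        exact hB _ _ ((Fin.strictMono_succAbove 0).comp hu))
    linarith

variable {m n k l : ℕ}

lemma natAdd_inj : Function.Injective (Fin.natAdd m : Fin n → Fin (m+n)) := fun a b hab => by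
  have := congrArg Fin.val hab
  simp only [Fin.coe_natAdd] at this
  exact Fin.ext (by omega)

lemma nat_ne_cast (i : Fin n) (j : Fin m) : Fin.natAdd m i ≠ Fin.castAdd n j := by
  intro hc
  have := congrArg Fin.val hc
  simp only [Fin.coe_natAdd, Fin.coe_castAdd] at this
  have := j.isLt
  omega

lemma one_sub_nat : (1 : Matrix (Fin (m+n)) (Fin (m+n)) ℝ).submatrix (Fin.natAdd m) (Fin.natAdd m)
    = 1 := by
  ext i j
  simp [Matrix.one_apply, natAdd_inj.eq_iff]

lemma one_sub_cast : (1 : Matrix (Fin (m+n)) (Fin (m+n)) ℝ).submatrix (Fin.castAdd n) (Fin.castAdd n)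
    = 1 := by
  ext i j
  simp [Matrix.one_apply, (Fin.castAdd_injective m n).eq_iff]

lemma one_sub_nat_cast :
    (1 : Matrix (Fin (m+n)) (Fin (m+n)) ℝ).submatrix (Fin.natAdd m) (Fin.castAdd n) = 0 := by
  ext i j
  simp [Matrix.one_apply, nat_ne_cast i j]

lemma one_sub_cast_nat :
    (1 : Matrix (Fin (m+n)) (Fin (m+n)) ℝ).submatrix (Fin.castAdd n) (Fin.natAdd m) = 0 := by
  ext i j
  simp [Matrix.one_apply, (nat_ne_cast j i).symm]

lemma mul_split (M N : Matrix (Fin (m+n)) (Fin (m+n)) ℝ)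
    (f : Fin k → Fin (m+n)) (g : Fin l → Fin (m+n)) :
    (M * N).submatrix f g =
      M.submatrix f (Fin.castAdd n) * N.submatrix (Fin.castAdd n) g
        + M.submatrix f (Fin.natAdd m) * N.submatrix (Fin.natAdd m) g := by
  ext i j
  simp only [Matrix.submatrix_apply, Matrix.add_apply, Matrix.mul_apply]
  exact Fin.sum_univ_add _

lemma elim_strictMono (f : Fin k → Fin n) (hf : StrictMono f) :
    StrictMono ((Sum.elim (Fin.castAdd n) (Fin.natAdd m ∘ f)) ∘
      (finSumFinEquiv.symm : Fin (m+k) → Fin m ⊕ Fin k)) := by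
  intro i j hij
  obtain ⟨x, rfl⟩ := finSumFinEquiv.surjective i
  obtain ⟨y, rfl⟩ := finSumFinEquiv.surjective j
  simp only [Function.comp_apply, Equiv.symm_apply_apply]
  rcases x with a | a <;> rcases y with b | b <;>
      simp only [finSumFinEquiv_apply_left, finSumFinEquiv_apply_right, Fin.lt_def,
        Fin.coe_castAdd, Fin.coe_natAdd, Sum.elim_inl, Sum.elim_inr, Function.comp_apply]
        at hij ⊢
  · exact hij
  · have := a.isLt; omega
  · have := b.isLt; omega
  · have hab : (a : ℕ) < b := by omega
    have := Fin.lt_def.mp (hf (Fin.lt_def.mpr hab))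
    omega

lemma diagonal_submatrix {ι κ : Type*} [DecidableEq ι] [DecidableEq κ]
    (d : κ → ℝ) (u : ι → κ) (hu : Function.Injective u) :
    (Matrix.diagonal d).submatrix u u = Matrix.diagonal (d ∘ u) := by
  ext i j
  simp only [Matrix.submatrix_apply, Matrix.diagonal_apply, hu.eq_iff, Function.comp_apply]

lemma fromBlocks_as_submatrix (C : Matrix (Fin (m+n)) (Fin (m+n)) ℝ)
    (f g : Fin k → Fin n) :
    Matrix.fromBlocks (C.submatrix (Fin.castAdd n) (Fin.castAdd n))
        (C.submatrix (Fin.castAdd n) (Fin.natAdd m ∘ g))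
        (C.submatrix (Fin.natAdd m ∘ f) (Fin.castAdd n))
        (C.submatrix (Fin.natAdd m ∘ f) (Fin.natAdd m ∘ g))
      = C.submatrix (Sum.elim (Fin.castAdd n) (Fin.natAdd m ∘ f))
          (Sum.elim (Fin.castAdd n) (Fin.natAdd m ∘ g)) := by
  ext (i | i) (j | j) <;> rfl

lemma J_sub : (Matrix.fromBlocks (1 : Matrix (Fin m) (Fin m) ℝ) 0 0
      (0 : Matrix (Fin k) (Fin k) ℝ)).submatrix finSumFinEquiv.symm finSumFinEquiv.symm
    = Matrix.diagonal (fun i : Fin (m+k) => if (i : ℕ) < m then (1:ℝ) else 0) := by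
  ext i j
  obtain ⟨x, rfl⟩ := finSumFinEquiv.surjective i
  obtain ⟨y, rfl⟩ := finSumFinEquiv.surjective j
  simp only [Matrix.submatrix_apply, Equiv.symm_apply_apply]
  rcases x with a | a <;> rcases y with b | b
  · rcases eq_or_ne a b with rfl | hab
    · have ha := a.isLt
      simp [Matrix.diagonal_apply, ha]
    · have h1 : Fin.castAdd k a ≠ Fin.castAdd k b :=
        fun hc => hab ((Fin.castAdd_injective m k) hc)
      simp [Matrix.one_apply, Matrix.diagonal_apply, hab, h1]
  · have h1 : Fin.castAdd k a ≠ Fin.natAdd m b := (nat_ne_cast b a).symm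
    simp [Matrix.diagonal_apply, h1]
  · have h1 : Fin.natAdd m a ≠ Fin.castAdd k b := nat_ne_cast a b
    simp [Matrix.diagonal_apply, h1]
  · rcases eq_or_ne a b with rfl | hab
    · simp [Matrix.diagonal_apply]
    · have h1 : Fin.natAdd m a ≠ Fin.natAdd m b := fun hc => hab (natAdd_inj hc)
      simp [Matrix.diagonal_apply, h1]

end WidomAux

theorem widom_stmt18 {m n : ℕ} (C : Matrix (Fin (m + n)) (Fin (m + n)) ℝ)
    (hC : TotallyNonneg C) (h : IsUnit (1 + C))
    (D : Matrix (Fin n) (Fin n) ℝ)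
    (hD : D = (C * (1 + C)⁻¹).submatrix (Fin.natAdd m) (Fin.natAdd m))
    (hDdet : (1 - D).det ≠ 0)
    (E : Matrix (Fin n) (Fin n) ℝ)
    (hE : E = D * (1 - D)⁻¹) :
    TotallyNonneg E := by
  classical
  set A : Matrix (Fin (m+n)) (Fin (m+n)) ℝ := 1 + C with hA
  have hdetA : IsUnit A.det := (Matrix.isUnit_iff_isUnit_det A).mp h
  have hAinv : A * A⁻¹ = 1 := Matrix.mul_nonsing_inv A hdetA
  have hinvA : A⁻¹ * A = 1 := Matrix.nonsing_inv_mul A hdetA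
  have hCA : C * A⁻¹ = 1 - A⁻¹ := by
    have hC' : C = A - 1 := by rw [hA, add_sub_cancel_left]
    rw [hC', sub_mul, one_mul, hAinv]
  set N : Matrix (Fin n) (Fin n) ℝ := A⁻¹.submatrix (Fin.natAdd m) (Fin.natAdd m) with hN
  have hD1 : D = 1 - N := by
    rw [hD, hCA]
    have : ((1 - A⁻¹).submatrix (Fin.natAdd m) (Fin.natAdd m) : Matrix (Fin n) (Fin n) ℝ)
        = (1 : Matrix (Fin (m+n)) (Fin (m+n)) ℝ).submatrix (Fin.natAdd m) (Fin.natAdd m)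
          - A⁻¹.submatrix (Fin.natAdd m) (Fin.natAdd m) := rfl
    rw [this, one_sub_nat, hN]
  -- blocks of C
  set C00 : Matrix (Fin m) (Fin m) ℝ := C.submatrix (Fin.castAdd n) (Fin.castAdd n) with hC00
  set C01 : Matrix (Fin m) (Fin n) ℝ := C.submatrix (Fin.castAdd n) (Fin.natAdd m) with hC01
  set C10 : Matrix (Fin n) (Fin m) ℝ := C.submatrix (Fin.natAdd m) (Fin.castAdd n) with hC10
  set C11 : Matrix (Fin n) (Fin n) ℝ := C.submatrix (Fin.natAdd m) (Fin.natAdd m) with hC11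
  set P : Matrix (Fin m) (Fin m) ℝ := 1 + C00 with hPdef
  have hC00min : ∀ (j : ℕ) (u : Fin j → Fin m), StrictMono u → 0 ≤ (C00.submatrix u u).det := by
    intro j u hu
    rw [hC00, Matrix.submatrix_submatrix]
    exact hC _ _ _ ((Fin.strictMono_castAdd n).comp hu) ((Fin.strictMono_castAdd n).comp hu)
  have hdetP : 1 ≤ P.det := by
    have h2 := widom_key2 m C00 hC00min
    rw [hPdef, add_comm]
    exact h2
  have hPunit : IsUnit P.det := isUnit_iff_ne_zero.mpr (by linarith)
  have hPinv : P * P⁻¹ = 1 := Matrix.mul_nonsing_inv P hPunit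
  -- block identities for A
  have hA00 : A.submatrix (Fin.castAdd n) (Fin.castAdd n) = P := by
    have e : A.submatrix (Fin.castAdd n) (Fin.castAdd n)
        = (1:Matrix (Fin (m+n)) (Fin (m+n)) ℝ).submatrix (Fin.castAdd n) (Fin.castAdd n)
          + C.submatrix (Fin.castAdd n) (Fin.castAdd n) := rfl
    rw [e, one_sub_cast, hPdef, hC00]
  have hA10 : A.submatrix (Fin.natAdd m) (Fin.castAdd n) = C10 := by
    have e : A.submatrix (Fin.natAdd m) (Fin.castAdd n)
        = (1:Matrix (Fin (m+n)) (Fin (m+n)) ℝ).submatrix (Fin.natAdd m) (Fin.castAdd n)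
          + C.submatrix (Fin.natAdd m) (Fin.castAdd n) := rfl
    rw [e, one_sub_nat_cast, hC10, zero_add]
  have hA01 : A.submatrix (Fin.castAdd n) (Fin.natAdd m) = C01 := by
    have e : A.submatrix (Fin.castAdd n) (Fin.natAdd m)
        = (1:Matrix (Fin (m+n)) (Fin (m+n)) ℝ).submatrix (Fin.castAdd n) (Fin.natAdd m)
          + C.submatrix (Fin.castAdd n) (Fin.natAdd m) := rfl
    rw [e, one_sub_cast_nat, hC01, zero_add]
  have hA11 : A.submatrix (Fin.natAdd m) (Fin.natAdd m) = 1 + C11 := by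
    have e : A.submatrix (Fin.natAdd m) (Fin.natAdd m)
        = (1:Matrix (Fin (m+n)) (Fin (m+n)) ℝ).submatrix (Fin.natAdd m) (Fin.natAdd m)
          + C.submatrix (Fin.natAdd m) (Fin.natAdd m) := rfl
    rw [e, one_sub_nat, hC11]
  set G10 : Matrix (Fin n) (Fin m) ℝ := A⁻¹.submatrix (Fin.natAdd m) (Fin.castAdd n) with hG10def
  have eq1 : G10 * P + N * C10 = 0 := by
    have e1 := congrArg (fun M : Matrix (Fin (m+n)) (Fin (m+n)) ℝ =>
      M.submatrix (Fin.natAdd m) (Fin.castAdd n)) hinvA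
    rw [mul_split, hA00, hA10] at e1
    rw [hG10def, hN]
    rw [e1]
    exact one_sub_nat_cast
  have eq2 : G10 * C01 + N * (1 + C11) = 1 := by
    have e2 := congrArg (fun M : Matrix (Fin (m+n)) (Fin (m+n)) ℝ =>
      M.submatrix (Fin.natAdd m) (Fin.natAdd m)) hinvA
    rw [mul_split, hA01, hA11] at e2
    rw [hG10def, hN, e2]
    exact one_sub_nat
  have hG10 : G10 = -(N * C10 * P⁻¹) := by
    have : G10 * P = -(N * C10) := by
      have := eq1
      linear_combination (norm := noncomm_ring) this
    calc G10 = G10 * (P * P⁻¹) := by rw [hPinv, Matrix.mul_one]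
      _ = G10 * P * P⁻¹ := by rw [Matrix.mul_assoc]
      _ = -(N * C10) * P⁻¹ := by rw [this]
      _ = -(N * C10 * P⁻¹) := by rw [Matrix.neg_mul]
  set X : Matrix (Fin n) (Fin n) ℝ := C11 - C10 * P⁻¹ * C01 with hX
  have hNX : N * (1 + X) = 1 := by
    have e : N * (1 + X) = G10 * C01 + N * (1 + C11) := by
      rw [hG10, hX]
      simp only [Matrix.neg_mul, Matrix.mul_add, Matrix.mul_sub, Matrix.mul_one,
        ← Matrix.mul_assoc]
      abel
    rw [e, eq2]
  have hNinv : N⁻¹ = 1 + X := Matrix.inv_eq_right_inv hNX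
  have hEX : E = X := by
    have h1N : (1 : Matrix (Fin n) (Fin n) ℝ) - D = N := by rw [hD1, sub_sub_cancel]
    rw [hE, h1N, hNinv, hD1]
    calc (1 - N) * (1 + X) = (1 + X) - N * (1 + X) := by noncomm_ring
      _ = (1 + X) - 1 := by rw [hNX]
      _ = X := by rw [add_sub_cancel_left]
  -- now prove total nonnegativity
  intro k f g hf hg
  rw [hEX]
  set Q : Matrix (Fin m) (Fin k) ℝ := C.submatrix (Fin.castAdd n) (Fin.natAdd m ∘ g) with hQ
  set R : Matrix (Fin k) (Fin m) ℝ := C.submatrix (Fin.natAdd m ∘ f) (Fin.castAdd n) with hR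
  set S : Matrix (Fin k) (Fin k) ℝ := C.submatrix (Fin.natAdd m ∘ f) (Fin.natAdd m ∘ g) with hS
  have hmul : (C10 * P⁻¹ * C01).submatrix f g = R * P⁻¹ * Q := by
    rw [← Matrix.submatrix_mul_equiv (C10 * P⁻¹) C01 f (Equiv.refl (Fin m)) g,
      ← Matrix.submatrix_mul_equiv C10 P⁻¹ f (Equiv.refl (Fin m)) (Equiv.refl (Fin m))]
    simp only [Equiv.coe_refl, Matrix.submatrix_id_id]
    rw [hC10, hC01, Matrix.submatrix_submatrix, Matrix.submatrix_submatrix]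
    simp only [Function.comp_id, Function.id_comp]
    rfl
  have hC11fg : C11.submatrix f g = S := by
    rw [hC11, Matrix.submatrix_submatrix, hS]
  have hsub : X.submatrix f g = S - R * P⁻¹ * Q := by
    have hd : X.submatrix f g
        = C11.submatrix f g - (C10 * P⁻¹ * C01).submatrix f g := by rw [hX]; rfl
    rw [hd, hmul, hC11fg]
  haveI : Invertible P := P.invertibleOfIsUnitDet hPunit
  have hdetFB : (Matrix.fromBlocks P Q R S).det = P.det * (S - R * P⁻¹ * Q).det := by
    rw [Matrix.det_fromBlocks₁₁, invOf_eq_nonsing_inv]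
  have hFBpos : 0 ≤ (Matrix.fromBlocks P Q R S).det := by
    rw [← Matrix.det_submatrix_equiv_self finSumFinEquiv.symm]
    have h1 : Matrix.fromBlocks P Q R S
        = C.submatrix (Sum.elim (Fin.castAdd n) (Fin.natAdd m ∘ f))
            (Sum.elim (Fin.castAdd n) (Fin.natAdd m ∘ g))
          + Matrix.fromBlocks (1 : Matrix (Fin m) (Fin m) ℝ) 0 0 0 := by
      rw [← fromBlocks_as_submatrix C f g, Matrix.fromBlocks_add, add_zero, add_zero,
        add_zero, ← hC00, ← hQ, ← hR, ← hS, hPdef, add_comm C00 1]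
    have h2 : (Matrix.fromBlocks P Q R S).submatrix finSumFinEquiv.symm finSumFinEquiv.symm
        = C.submatrix ((Sum.elim (Fin.castAdd n) (Fin.natAdd m ∘ f)) ∘ finSumFinEquiv.symm)
            ((Sum.elim (Fin.castAdd n) (Fin.natAdd m ∘ g)) ∘ finSumFinEquiv.symm)
          + Matrix.diagonal (fun i : Fin (m+k) => if (i : ℕ) < m then (1:ℝ) else 0) := by
      rw [h1]
      have hadd : ∀ (U V : Matrix (Fin m ⊕ Fin k) (Fin m ⊕ Fin k) ℝ),
          (U + V).submatrix (finSumFinEquiv.symm : Fin (m+k) → _) finSumFinEquiv.symm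
          = U.submatrix finSumFinEquiv.symm finSumFinEquiv.symm
            + V.submatrix finSumFinEquiv.symm finSumFinEquiv.symm := fun U V => rfl
      rw [hadd, J_sub, Matrix.submatrix_submatrix]
    rw [h2]
    refine widom_key _ _ _ (fun i => ?_) (fun j u hu => ?_)
    · split <;> norm_num
    · rw [Matrix.submatrix_submatrix]
      exact hC _ _ _ ((elim_strictMono f hf).comp hu) ((elim_strictMono g hg).comp hu)
  rw [hsub]
  have hp : (0:ℝ) < P.det := by linarith
  have : 0 ≤ P.det * (S - R * P⁻¹ * Q).det := hdetFB ▸ hFBpos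
  exact (mul_nonneg_iff_of_pos_left hp).mp this
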